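/- For all x, y ≥ 0, κ > 0 and ε > 0, the x-derivative of the elastic correction term satisfies |∂_x g_ε^{E,κ}(x,y)| ≤ κ²·exp(−(x+y)²/(2ε)) + (2κ/√(2πε))·exp(−(x+y)²/(2ε)). -/

import Mathlib

open Real

open MeasureTheory Set

/-- The error function. -/
noncomputable def erf (x : ℝ) : ℝ := (2 / Real.sqrt π) * ∫ z in (0:ℝ)..x, Real.exp (-z^2)

/-- The elastic heat kernel correction term `g_ε^{E,κ}(x,y)`. -/
noncomputable def gElastic (ε κ x y : ℝ) : ℝ :=
  κ * Real.exp (κ * (x + y) + κ^2 * ε / 2) *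
    (1 - erf ((x + y + κ * ε) / Real.sqrt (2 * ε)))

lemma erf_hasDerivAt (t : ℝ) : HasDerivAt erf ((2 / Real.sqrt π) * Real.exp (-t^2)) t := by
  have hc : Continuous fun z : ℝ => Real.exp (-z^2) := by continuity
  have := (hc.integral_hasStrictDerivAt 0 t).hasDerivAt
  have e : erf = fun y => 2 / Real.sqrt π * ∫ x in (0:ℝ)..y, Real.exp (-x^2) := by funext y; rfl
  rw [e]; exact this.const_mul (2 / Real.sqrt π)

lemma gauss_Ioi : ∫ z in Ioi (0:ℝ), Real.exp (-z^2) = Real.sqrt π / 2 := by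
  have := integral_gaussian_Ioi 1
  simpa using this

lemma gauss_int : Integrable (fun z : ℝ => Real.exp (-z^2)) := by
  simpa using integrable_exp_neg_mul_sq (one_pos)

lemma shift_Ioi (u : ℝ) :
    ∫ z in Ioi u, Real.exp (-(z-u)^2) = Real.sqrt π / 2 := by
  rw [← integral_indicator measurableSet_Ioi]
  have : ∫ t : ℝ, (Ioi u).indicator (fun z => Real.exp (-(z-u)^2)) (t + u)
      = ∫ t : ℝ, (Ioi u).indicator (fun z => Real.exp (-(z-u)^2)) t :=
    integral_add_right_eq_self _ u
  rw [← this]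
  have heq : ∀ t : ℝ, (Ioi u).indicator (fun z => Real.exp (-(z-u)^2)) (t + u)
      = (Ioi (0:ℝ)).indicator (fun z => Real.exp (-z^2)) t := by
    intro t
    by_cases ht : 0 < t
    · simp [Set.indicator_apply, ht]
    · simp [Set.indicator_apply, ht]
  simp_rw [heq]
  rw [integral_indicator measurableSet_Ioi, gauss_Ioi]

lemma erfc_nonneg {u : ℝ} (hu : 0 ≤ u) : 0 ≤ 1 - erf u ∧ 1 - erf u ≤ Real.exp (-u^2) := by
  have hπ : (0:ℝ) < Real.sqrt π := Real.sqrt_pos.mpr Real.pi_pos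
  have hsplit : (Real.sqrt π / 2) = (∫ z in Ioc (0:ℝ) u, Real.exp (-z^2))
      + ∫ z in Ioi u, Real.exp (-z^2) := by
    rw [← gauss_Ioi, ← Ioc_union_Ioi_eq_Ioi hu,
      setIntegral_union (Ioc_disjoint_Ioi le_rfl) measurableSet_Ioi
        gauss_int.integrableOn gauss_int.integrableOn]
  have herf : 1 - erf u = (2 / Real.sqrt π) * ∫ z in Ioi u, Real.exp (-z^2) := by
    rw [erf, intervalIntegral.integral_of_le hu]
    have h1 : (2 / Real.sqrt π) * (Real.sqrt π / 2) = 1 := by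
      field_simp
    nlinarith [hsplit]
  constructor
  · rw [herf]
    apply mul_nonneg (by positivity)
    exact setIntegral_nonneg measurableSet_Ioi fun z _ => (Real.exp_pos _).le
  · rw [herf]
    have hbound : (∫ z in Ioi u, Real.exp (-z^2))
        ≤ ∫ z in Ioi u, Real.exp (-u^2) * Real.exp (-(z-u)^2) := by
      apply setIntegral_mono_on gauss_int.integrableOn
      · exact ((gauss_int.comp_sub_right u).const_mul _).integrableOn
      · exact measurableSet_Ioi
      · intro z hz
        rw [← Real.exp_add]
        apply Real.exp_le_exp.mpr
        have : 0 ≤ u * (z - u) := mul_nonneg hu (by simp at hz; linarith)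
        nlinarith
    have heval : (∫ z in Ioi u, Real.exp (-u^2) * Real.exp (-(z-u)^2))
        = Real.exp (-u^2) * (Real.sqrt π / 2) := by
      rw [MeasureTheory.integral_const_mul, shift_Ioi]
    calc (2 / Real.sqrt π) * ∫ z in Ioi u, Real.exp (-z^2)
        ≤ (2 / Real.sqrt π) * (Real.exp (-u^2) * (Real.sqrt π / 2)) := by
          rw [← heval]; exact mul_le_mul_of_nonneg_left hbound (by positivity)
      _ = Real.exp (-u^2) := by field_simp


/-- For all `x, y ≥ 0`, `κ > 0` and `ε > 0`, the `x`-derivative of the elastic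
correction term satisfies
`|∂_x g_ε^{E,κ}(x,y)| ≤ κ²·exp(−(x+y)²/(2ε)) + (2κ/√(2πε))·exp(−(x+y)²/(2ε))`. -/
theorem elastic_correction_deriv_bound (ε κ x y : ℝ) (hx : 0 ≤ x) (hy : 0 ≤ y)
    (hε : 0 < ε) (hκ : 0 < κ) :
    |deriv (fun x' => gElastic ε κ x' y) x|
      ≤ κ^2 * Real.exp (-(x + y)^2 / (2 * ε))
        + (2 * κ / Real.sqrt (2 * π * ε)) * Real.exp (-(x + y)^2 / (2 * ε)) := by
  have h2ε : (0:ℝ) < 2 * ε := by linarith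
  have hc : 0 < Real.sqrt (2 * ε) := Real.sqrt_pos.mpr h2ε
  have hc2 : (Real.sqrt (2 * ε))^2 = 2 * ε := Real.sq_sqrt h2ε.le
  set c := Real.sqrt (2 * ε) with hcdef
  set u := (x + y + κ * ε) / c with hudef
  have hu0 : 0 ≤ u := div_nonneg (by positivity) hc.le
  set E := Real.exp (κ * (x + y) + κ^2 * ε / 2) with hEdef
  set G := Real.exp (-(x + y)^2 / (2 * ε)) with hGdef
  have hπ : (0:ℝ) < Real.sqrt π := Real.sqrt_pos.mpr Real.pi_pos
  -- derivative computation
  have h1 : HasDerivAt (fun x' : ℝ => κ * (x' + y) + κ^2 * ε / 2) κ x := by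
    have := (((hasDerivAt_id x).add_const y).const_mul κ).add_const (κ^2 * ε / 2)
    simpa using this
  have hE := h1.exp
  have h2 : HasDerivAt (fun x' : ℝ => (x' + y + κ * ε) / c) (1 / c) x := by
    have := (((hasDerivAt_id x).add_const y).add_const (κ * ε)).div_const c
    simpa [one_div] using this
  have hErf : HasDerivAt (fun x' : ℝ => erf ((x' + y + κ * ε) / c))
      ((2 / Real.sqrt π) * Real.exp (-u^2) * (1 / c)) x := by
    have := (erf_hasDerivAt u).comp x h2
    exact this
  have hF : HasDerivAt (fun x' : ℝ => 1 - erf ((x' + y + κ * ε) / c))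
      (-((2 / Real.sqrt π) * Real.exp (-u^2) * (1 / c))) x := by
    exact hErf.const_sub 1
  have hg := (hE.const_mul κ).mul hF
  have hfun : (fun x' => gElastic ε κ x' y)
      = fun x' : ℝ => κ * Real.exp (κ * (x' + y) + κ^2 * ε / 2) *
          (1 - erf ((x' + y + κ * ε) / c)) := by
    funext x'; simp only [gElastic, ← hcdef]
  have hD : deriv (fun x' => gElastic ε κ x' y) x
      = κ * (Real.exp (κ * (x + y) + κ^2 * ε / 2) * κ) * (1 - erf u)
        + κ * Real.exp (κ * (x + y) + κ^2 * ε / 2) *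
          (-((2 / Real.sqrt π) * Real.exp (-u^2) * (1 / c))) := by
    rw [hfun]; exact hg.deriv
  -- key exponential identity
  have hu2 : u^2 = (x + y + κ * ε)^2 / (2 * ε) := by rw [hudef, div_pow, hc2]
  have hEG : E * Real.exp (-u^2) = G := by
    rw [hEdef, hGdef, ← Real.exp_add]
    congr 1
    rw [hu2]
    field_simp
    ring
  -- bounds
  obtain ⟨hF0, hF1⟩ := erfc_nonneg hu0
  have hA0 : 0 ≤ κ * (E * κ) * (1 - erf u) := by positivity
  have hA1 : κ * (E * κ) * (1 - erf u) ≤ κ^2 * G := by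
    calc κ * (E * κ) * (1 - erf u) ≤ κ * (E * κ) * Real.exp (-u^2) :=
          mul_le_mul_of_nonneg_left hF1 (by positivity)
      _ = κ^2 * G := by rw [← hEG]; ring
  have hsqrt : Real.sqrt (2 * π * ε) = Real.sqrt π * c := by
    rw [hcdef, show 2 * π * ε = π * (2 * ε) by ring, Real.sqrt_mul Real.pi_pos.le]
  have hB : κ * E * ((2 / Real.sqrt π) * Real.exp (-u^2) * (1 / c))
      = (2 * κ / Real.sqrt (2 * π * ε)) * G := by
    rw [hsqrt, ← hEG]
    field_simp
  have hB0 : 0 ≤ (2 * κ / Real.sqrt (2 * π * ε)) * G := by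
    have : (0:ℝ) < Real.sqrt (2 * π * ε) := Real.sqrt_pos.mpr (by positivity)
    positivity
  rw [hD]
  rw [abs_le]
  constructor
  · have := hB.le
    nlinarith [hA0, hB0]
  · nlinarith [hA1, hB0, hB.le]
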